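/- Let F be a field of characteristic zero, E a set, g the free Lie algebra on E, and U(g)^* the full linear dual with actions (x ▹ h)(y) = h(yx) and (x ◁ h)(y) = h(xy). The set of h ∈ U(g)^* such that for all p ∈ ℕ and all e_1, ..., e_p ∈ E one has h(e_1^{k_1} ⋯ e_p^{k_p}) ≠ 0 for at most finitely many tuples (k_1,...,k_p) ∈ ℕ₀^p is a subalgebra of the convolution algebra U(g)^*, invariant under both actions ▹ and ◁, and invariant under the dual of the antipode of U(g). -/

import Mathlib

open scoped TensorProduct

section AuxStmt19

variable {F : Type*} [Field F] {E : Type*}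

noncomputable def wrd (F : Type*) [Field F] {E : Type*} {p : ℕ} (es : Fin p → E) (k : Fin p → ℕ) :
    MonoidAlgebra F (FreeMonoid E) :=
  MonoidAlgebra.single ((List.ofFn fun i => FreeMonoid.of (es i) ^ k i).prod) (1 : F)

lemma single_freemonoid_prod (l : List (FreeMonoid E)) :
    (MonoidAlgebra.single l.prod (1 : F) : MonoidAlgebra F (FreeMonoid E)) =
      (l.map fun w => MonoidAlgebra.single w (1 : F)).prod := by
  induction l with
  | nil => simp [MonoidAlgebra.one_def]
  | cons a t ih =>
      rw [List.prod_cons, List.map_cons, List.prod_cons, ← ih,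
        MonoidAlgebra.single_mul_single, one_mul]

lemma wrd_eq_prod {p : ℕ} (es : Fin p → E) (k : Fin p → ℕ) :
    wrd F es k = (List.ofFn fun i =>
      (MonoidAlgebra.single (FreeMonoid.of (es i)) (1 : F)) ^ k i).prod := by
  rw [wrd, single_freemonoid_prod, List.map_ofFn]
  simp [Function.comp_def, MonoidAlgebra.single_pow]

lemma wrd_zero (es : Fin 0 → E) (k : Fin 0 → ℕ) : wrd F es k = 1 := by
  simp [wrd_eq_prod]

lemma wrd_cons {p : ℕ} (es : Fin (p + 1) → E) (k : Fin (p + 1) → ℕ) :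
    wrd F es k = (MonoidAlgebra.single (FreeMonoid.of (es 0)) (1 : F)) ^ k 0 *
      wrd F (es ∘ Fin.succ) (k ∘ Fin.succ) := by
  rw [wrd_eq_prod, wrd_eq_prod, List.ofFn_succ, List.prod_cons]
  rfl

lemma wrd_snoc {p : ℕ} (es : Fin (p + 1) → E) (k : Fin (p + 1) → ℕ) :
    wrd F es k = wrd F (es ∘ Fin.castSucc) (k ∘ Fin.castSucc) *
      (MonoidAlgebra.single (FreeMonoid.of (es (Fin.last p))) (1 : F)) ^ k (Fin.last p) := by
  rw [wrd_eq_prod, wrd_eq_prod, List.ofFn_succ', List.concat_eq_append, List.prod_append,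
    List.prod_cons, List.prod_nil, mul_one]
  rfl

lemma wrd_append {p q : ℕ} (es : Fin p → E) (k : Fin p → ℕ) (fs : Fin q → E) (l : Fin q → ℕ) :
    wrd F (Fin.append es fs) (Fin.append k l) = wrd F es k * wrd F fs l := by
  rw [wrd_eq_prod, wrd_eq_prod, wrd_eq_prod, ← List.prod_append, ← List.ofFn_fin_append]
  congr 1
  refine congrArg List.ofFn (funext fun i => ?_)
  refine Fin.addCases (fun j => ?_) (fun j => ?_) i <;>
    simp [Fin.append_left, Fin.append_right]

lemma prod_map_of (l : List E) : (l.map FreeMonoid.of).prod = FreeMonoid.ofList l := by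
  induction l with
  | nil => rfl
  | cons a t ih => rw [List.map_cons, List.prod_cons, ih, FreeMonoid.ofList_cons]

lemma single_eq_wrd (w : FreeMonoid E) :
    MonoidAlgebra.single w (1 : F) =
      wrd F (fun i : Fin (FreeMonoid.toList w).length => (FreeMonoid.toList w).get i)
        (fun _ => 1) := by
  rw [wrd]
  congr 1
  simp only [pow_one]
  conv_lhs => rw [← FreeMonoid.ofList_toList w, ← prod_map_of, ← List.ofFn_get
    (FreeMonoid.toList w), List.map_ofFn]
  rfl

lemma delta_pow (Δ : MonoidAlgebra F (FreeMonoid E) →ₐ[F]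
      (MonoidAlgebra F (FreeMonoid E) ⊗[F] MonoidAlgebra F (FreeMonoid E)))
    (hΔ : ∀ a : E, Δ (MonoidAlgebra.single (FreeMonoid.of a) 1) =
        MonoidAlgebra.single (FreeMonoid.of a) 1 ⊗ₜ[F] 1 +
          1 ⊗ₜ[F] MonoidAlgebra.single (FreeMonoid.of a) 1)
    (e : E) (n : ℕ) :
    Δ ((MonoidAlgebra.single (FreeMonoid.of e) (1 : F)) ^ n) =
      ∑ j ∈ Finset.range (n + 1), ((n.choose j : F)) •
        (((MonoidAlgebra.single (FreeMonoid.of e) (1 : F)) ^ j) ⊗ₜ[F]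
         ((MonoidAlgebra.single (FreeMonoid.of e) (1 : F)) ^ (n - j))) := by
  set x := MonoidAlgebra.single (FreeMonoid.of e) (1 : F) with hx
  rw [map_pow, hΔ]
  have hc : Commute (x ⊗ₜ[F] (1 : MonoidAlgebra F (FreeMonoid E)))
      ((1 : MonoidAlgebra F (FreeMonoid E)) ⊗ₜ[F] x) := by
    simp [Commute, SemiconjBy, Algebra.TensorProduct.tmul_mul_tmul]
  rw [hc.add_pow]
  refine Finset.sum_congr rfl fun j hj => ?_
  rw [Algebra.TensorProduct.tmul_pow, Algebra.TensorProduct.tmul_pow, one_pow, one_pow,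
    Algebra.TensorProduct.tmul_mul_tmul, mul_one, one_mul,
    ← (Nat.cast_commute (n.choose j) ((x ^ j) ⊗ₜ[F] (x ^ (n - j)))).eq]
  rw [Nat.cast_smul_eq_nsmul F, nsmul_eq_mul]

lemma delta_wrd (Δ : MonoidAlgebra F (FreeMonoid E) →ₐ[F]
      (MonoidAlgebra F (FreeMonoid E) ⊗[F] MonoidAlgebra F (FreeMonoid E)))
    (hΔ : ∀ a : E, Δ (MonoidAlgebra.single (FreeMonoid.of a) 1) =
        MonoidAlgebra.single (FreeMonoid.of a) 1 ⊗ₜ[F] 1 +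
          1 ⊗ₜ[F] MonoidAlgebra.single (FreeMonoid.of a) 1) :
    ∀ (p : ℕ) (es : Fin p → E) (k : Fin p → ℕ),
    ∃ (ι : Type) (_ : Fintype ι) (a b : ι → (Fin p → ℕ)) (c : ι → F),
      (∀ i, a i + b i = k) ∧
      Δ (wrd F es k) = ∑ i, c i • (wrd F es (a i) ⊗ₜ[F] wrd F es (b i)) := by
  intro p
  induction p with
  | zero =>
      intro es k
      refine ⟨PUnit, inferInstance, fun _ => k, fun _ => k, fun _ => 1, ?_, ?_⟩
      · intro i; funext j; exact j.elim0
      · simp [wrd_zero, Algebra.TensorProduct.one_def]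
  | succ p ih =>
      intro es k
      obtain ⟨ι, _, a, b, c, hab, hd⟩ := ih (es ∘ Fin.castSucc) (k ∘ Fin.castSucc)
      set n := k (Fin.last p) with hn
      set x := MonoidAlgebra.single (FreeMonoid.of (es (Fin.last p))) (1 : F) with hx
      refine ⟨ι × Fin (n + 1), inferInstance,
        fun q => Fin.snoc (a q.1) q.2.val, fun q => Fin.snoc (b q.1) (n - q.2.val),
        fun q => c q.1 * (n.choose q.2.val : F), ?_, ?_⟩
      · rintro ⟨i, j⟩
        funext m
        refine Fin.lastCases ?_ (fun m' => ?_) m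
        · simp only [Pi.add_apply, Fin.snoc_last]
          exact Nat.add_sub_cancel' (Nat.lt_succ_iff.mp j.isLt)
        · have := congrFun (hab i) m'
          simpa [Fin.snoc_castSucc] using this
      · rw [wrd_snoc, map_mul, hd, delta_pow Δ hΔ, ← hx, ← hn]
        rw [← Fin.sum_univ_eq_sum_range (fun j => ((n.choose j : F)) •
            ((x ^ j) ⊗ₜ[F] (x ^ (n - j)))) (n + 1)]
        rw [Finset.sum_mul_sum Finset.univ Finset.univ
          (fun i => c i • (wrd F (es ∘ Fin.castSucc) (a i) ⊗ₜ[F] wrd F (es ∘ Fin.castSucc) (b i)))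
          (fun j : Fin (n + 1) => ((n.choose j.val : F)) •
            ((x ^ j.val) ⊗ₜ[F] (x ^ (n - j.val))))]
        rw [← Finset.sum_product']
        rw [← Finset.univ_product_univ]
        refine Finset.sum_congr rfl fun q _ => ?_
        obtain ⟨i, j⟩ := q
        rw [smul_mul_smul_comm, Algebra.TensorProduct.tmul_mul_tmul]
        congr 2
        · rw [wrd_snoc]
          congr 1
          · congr 1 <;> funext m <;> simp [Fin.snoc_castSucc]
          · simp [hx, MonoidAlgebra.single_pow]
        · rw [wrd_snoc]
          congr 1
          · congr 1 <;> funext m <;> simp [Fin.snoc_castSucc]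
          · simp [hx, MonoidAlgebra.single_pow]

section S
variable (S : MonoidAlgebra F (FreeMonoid E) →ₗ[F] MonoidAlgebra F (FreeMonoid E))
    (hS2 : ∀ x y : MonoidAlgebra F (FreeMonoid E), S (x * y) = S y * S x)
    (hS3 : S 1 = 1)
include hS2 hS3

lemma S_pow (y : MonoidAlgebra F (FreeMonoid E)) : ∀ n : ℕ, S (y ^ n) = (S y) ^ n := by
  intro n
  induction n with
  | zero => simpa using hS3
  | succ m ih => rw [pow_succ, hS2, ih, ← pow_succ']

lemma S_wrd (hS1 : ∀ a : E, S (MonoidAlgebra.single (FreeMonoid.of a) 1) =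
      -MonoidAlgebra.single (FreeMonoid.of a) 1) :
    ∀ (p : ℕ) (es : Fin p → E) (k : Fin p → ℕ),
      S (wrd F es k) = ((-1 : F) ^ (∑ i, k i)) • wrd F (es ∘ Fin.rev) (k ∘ Fin.rev) := by
  intro p
  induction p with
  | zero =>
      intro es k
      rw [wrd_zero, wrd_zero, hS3]
      simp
  | succ p ih =>
      intro es k
      rw [wrd_snoc, hS2, S_pow S hS2 hS3, hS1, ih]
      have he : (es ∘ Fin.rev) ∘ Fin.succ = (es ∘ Fin.castSucc) ∘ Fin.rev := by
        funext m; simp [Function.comp, Fin.rev_succ]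
      have hk : (k ∘ Fin.rev) ∘ Fin.succ = (k ∘ Fin.castSucc) ∘ Fin.rev := by
        funext m; simp [Function.comp, Fin.rev_succ]
      have h0e : (es ∘ Fin.rev) 0 = es (Fin.last p) := by
        simp [Function.comp, Fin.rev_zero]
      have h0k : (k ∘ Fin.rev) 0 = k (Fin.last p) := by
        simp [Function.comp, Fin.rev_zero]
      have h1 : wrd F (es ∘ Fin.rev) (k ∘ Fin.rev) =
          (MonoidAlgebra.single (FreeMonoid.of (es (Fin.last p))) (1 : F)) ^ k (Fin.last p) *
            wrd F ((es ∘ Fin.castSucc) ∘ Fin.rev) ((k ∘ Fin.castSucc) ∘ Fin.rev) := by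
        rw [wrd_cons, he, hk, h0e, h0k]
      rw [h1, neg_pow]
      rw [show ((-1 : MonoidAlgebra F (FreeMonoid E)) ^ k (Fin.last p)) =
        algebraMap F (MonoidAlgebra F (FreeMonoid E)) ((-1 : F) ^ k (Fin.last p)) by
          rw [map_pow, map_neg, map_one]]
      rw [← Algebra.smul_def, smul_mul_assoc, mul_smul_comm, smul_smul, ← pow_add, Fin.sum_univ_castSucc,
        add_comm (∑ i : Fin p, k (Fin.castSucc i)) (k (Fin.last p))]
      rfl
end S
lemma wrd_def {F : Type*} [Field F] {E : Type*} {p : ℕ} (es : Fin p → E) (k : Fin p → ℕ) :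
    MonoidAlgebra.single ((List.ofFn fun i => FreeMonoid.of (es i) ^ k i).prod) (1 : F) =
      wrd F es k := rfl

end AuxStmt19

/-- The regular linear functions on `U(g) = F[W]`, the enveloping algebra of the free
Lie algebra on `E` (identified with the monoid algebra of the free monoid of words):
functionals `h` such that for every `p` and every `e₁, ..., e_p ∈ E`,
`h(e₁^{k₁}⋯e_p^{k_p}) ≠ 0` for at most finitely many tuples `(k₁,...,k_p)`. -/
def RegularDual (F : Type*) [Field F] (E : Type*) :
    Set (Module.Dual F (MonoidAlgebra F (FreeMonoid E))) :=
  {h | ∀ (p : ℕ) (es : Fin p → E),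
    {k : Fin p → ℕ | h (MonoidAlgebra.single
      ((List.ofFn fun i => FreeMonoid.of (es i) ^ k i).prod) (1 : F)) ≠ 0}.Finite}

/-- the set of regular linear functions is a subalgebra of the
convolution algebra `U(g)^*` (the convolution product being dual to the
comultiplication `Δ` making each letter primitive, with unit the counit `ε`), is
invariant under both regular actions `(x ▹ h)(y) = h(yx)` and `(x ◁ h)(y) = h(xy)`,
and is invariant under the dual of the antipode `S` (the anti-automorphism with
`S(e) = -e` on letters). -/
theorem stmt19 {F : Type*} [Field F] [CharZero F] {E : Type*}
    (Δ : MonoidAlgebra F (FreeMonoid E) →ₐ[F]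
        (MonoidAlgebra F (FreeMonoid E) ⊗[F] MonoidAlgebra F (FreeMonoid E)))
    (hΔ : ∀ a : E, Δ (MonoidAlgebra.single (FreeMonoid.of a) 1) =
        MonoidAlgebra.single (FreeMonoid.of a) 1 ⊗ₜ[F] 1 +
          1 ⊗ₜ[F] MonoidAlgebra.single (FreeMonoid.of a) 1)
    (ε : MonoidAlgebra F (FreeMonoid E) →ₐ[F] F)
    (hε : ∀ a : E, ε (MonoidAlgebra.single (FreeMonoid.of a) 1) = 0)
    (S : MonoidAlgebra F (FreeMonoid E) →ₗ[F] MonoidAlgebra F (FreeMonoid E))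
    (hS1 : ∀ a : E, S (MonoidAlgebra.single (FreeMonoid.of a) 1) =
      -MonoidAlgebra.single (FreeMonoid.of a) 1)
    (hS2 : ∀ x y : MonoidAlgebra F (FreeMonoid E), S (x * y) = S y * S x)
    (hS3 : S 1 = 1) :
    -- closed under addition and scalar multiplication
    (∀ h₁ ∈ RegularDual F E, ∀ h₂ ∈ RegularDual F E, h₁ + h₂ ∈ RegularDual F E) ∧
    (∀ c : F, ∀ h₁ ∈ RegularDual F E, c • h₁ ∈ RegularDual F E) ∧
    -- contains the unit of the convolution algebra (the counit)
    ε.toLinearMap ∈ RegularDual F E ∧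
    -- closed under the convolution product
    (∀ h₁ ∈ RegularDual F E, ∀ h₂ ∈ RegularDual F E,
      ((TensorProduct.lid F F).toLinearMap.comp
        ((TensorProduct.map h₁ h₂).comp Δ.toLinearMap)) ∈ RegularDual F E) ∧
    -- invariant under both regular actions of U(g)
    (∀ h₁ ∈ RegularDual F E, ∀ x : MonoidAlgebra F (FreeMonoid E),
      h₁.comp (LinearMap.mulRight F x) ∈ RegularDual F E ∧
        h₁.comp (LinearMap.mulLeft F x) ∈ RegularDual F E) ∧
    -- invariant under the dual of the antipode
    (∀ h₁ ∈ RegularDual F E, h₁.comp S ∈ RegularDual F E) := by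
  refine ⟨?_, ?_, ?_, ?_, ?_, ?_⟩
  · -- addition
    intro h₁ hh₁ h₂ hh₂ p es
    refine Set.Finite.subset ((hh₁ p es).union (hh₂ p es)) ?_
    intro k hk
    simp only [Set.mem_setOf_eq, LinearMap.add_apply] at hk
    by_contra hc
    simp only [Set.mem_union, Set.mem_setOf_eq, not_or, not_not] at hc
    exact hk (by rw [hc.1, hc.2, add_zero])
  · -- scalar
    intro c h₁ hh₁ p es
    refine Set.Finite.subset (hh₁ p es) ?_
    intro k hk
    simp only [Set.mem_setOf_eq, LinearMap.smul_apply, smul_eq_mul] at hk ⊢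
    exact fun h0 => hk (by rw [h0, mul_zero])
  · -- counit
    intro p es
    refine Set.Finite.subset (Set.finite_singleton (fun _ => 0)) ?_
    intro k hk
    simp only [Set.mem_setOf_eq] at hk
    simp only [Set.mem_singleton_iff]
    by_contra hc
    apply hk
    have hex : ∃ i, k i ≠ 0 := by
      by_contra h'; push_neg at h'; exact hc (funext h')
    obtain ⟨i, hi⟩ := hex
    show ε (wrd F es k) = 0
    rw [wrd_eq_prod, map_list_prod, List.map_ofFn]
    refine List.prod_eq_zero ?_
    rw [List.mem_ofFn]
    exact ⟨i, by rw [Function.comp_apply, map_pow, hε, zero_pow hi]⟩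
  · -- convolution
    intro h₁ hh₁ h₂ hh₂ p es
    refine Set.Finite.subset (Set.Finite.image (fun q : ((Fin p → ℕ) × (Fin p → ℕ)) => q.1 + q.2)
      (Set.Finite.prod (hh₁ p es) (hh₂ p es))) ?_
    intro k hk
    simp only [Set.mem_setOf_eq] at hk
    obtain ⟨ι, _, a, b, c, hab, hd⟩ := delta_wrd Δ hΔ p es k
    have hval : (TensorProduct.lid F F) ((TensorProduct.map h₁ h₂) (Δ (wrd F es k))) =
        ∑ i, c i * (h₁ (wrd F es (a i)) * h₂ (wrd F es (b i))) := by
      rw [hd, map_sum, map_sum]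
      refine Finset.sum_congr rfl fun i _ => ?_
      rw [map_smul, map_smul, TensorProduct.map_tmul, TensorProduct.lid_tmul]
      simp only [smul_eq_mul, mul_assoc]
    have hk' : (∑ i, c i * (h₁ (wrd F es (a i)) * h₂ (wrd F es (b i)))) ≠ 0 := by
      rw [← hval]; exact hk
    obtain ⟨i, _, hne⟩ := Finset.exists_ne_zero_of_sum_ne_zero hk'
    have h1ne : h₁ (wrd F es (a i)) ≠ 0 := fun h0 => hne (by rw [h0, zero_mul, mul_zero])
    have h2ne : h₂ (wrd F es (b i)) ≠ 0 := fun h0 => hne (by rw [h0, mul_zero, mul_zero])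
    exact ⟨(a i, b i), ⟨h1ne, h2ne⟩, hab i⟩
  · -- actions
    intro h₁ hh₁ x
    constructor
    · intro p es
      have key : ∀ w : FreeMonoid E, {k : Fin p → ℕ |
          h₁ (wrd F es k * MonoidAlgebra.single w (1 : F)) ≠ 0}.Finite := by
        intro w
        have hinj : Function.Injective fun k : Fin p → ℕ =>
            Fin.append k (fun _ : Fin (FreeMonoid.toList w).length => 1) := by
          intro k k' hkk
          funext m
          have := congrFun hkk (Fin.castAdd _ m)
          simpa [Fin.append_left] using this
        refine Set.Finite.subset (Set.Finite.preimage hinj.injOn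
          (hh₁ (p + (FreeMonoid.toList w).length)
            (Fin.append es fun i => (FreeMonoid.toList w).get i))) ?_
        intro k hk
        simp only [Set.mem_setOf_eq] at hk
        simp only [Set.mem_preimage, Set.mem_setOf_eq]
        show h₁ (wrd F (Fin.append es fun i => (FreeMonoid.toList w).get i)
          (Fin.append k fun _ => 1)) ≠ 0
        rw [wrd_append, ← single_eq_wrd]
        exact hk
      refine Set.Finite.subset (Set.Finite.biUnion x.coeff.support.finite_toSet
        (fun w _ => key w)) ?_
      intro k hk
      simp only [Set.mem_setOf_eq, LinearMap.coe_comp, Function.comp_apply,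
        LinearMap.mulRight_apply] at hk
      by_contra hc
      apply hk
      have hx0 : ∀ w ∈ x.coeff.support, h₁ (wrd F es k * MonoidAlgebra.single w (1 : F)) = 0 := by
        intro w hwsup
        by_contra h0'
        exact hc (Set.mem_biUnion (Finset.mem_coe.mpr hwsup) h0')
      show h₁ (wrd F es k * x) = 0
      have hxsum : x = ∑ w ∈ x.coeff.support, MonoidAlgebra.single w (x.coeff w) := by
        conv_lhs => rw [← MonoidAlgebra.sum_coeff_single x]
        rfl
      rw [hxsum, Finset.mul_sum, map_sum]
      refine Finset.sum_eq_zero fun w hw => ?_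
      have : (MonoidAlgebra.single w (x.coeff w) : MonoidAlgebra F (FreeMonoid E)) =
          x.coeff w • MonoidAlgebra.single w (1 : F) := by
        rw [MonoidAlgebra.smul_single', mul_one]
      rw [this, mul_smul_comm, map_smul, hx0 w hw, smul_zero]
    · intro p es
      have key : ∀ w : FreeMonoid E, {k : Fin p → ℕ |
          h₁ (MonoidAlgebra.single w (1 : F) * wrd F es k) ≠ 0}.Finite := by
        intro w
        have hinj : Function.Injective fun k : Fin p → ℕ =>
            Fin.append (fun _ : Fin (FreeMonoid.toList w).length => 1) k := by
          intro k k' hkk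
          funext m
          have := congrFun hkk (Fin.natAdd _ m)
          simpa [Fin.append_right] using this
        refine Set.Finite.subset (Set.Finite.preimage hinj.injOn
          (hh₁ ((FreeMonoid.toList w).length + p)
            (Fin.append (fun i => (FreeMonoid.toList w).get i) es))) ?_
        intro k hk
        simp only [Set.mem_setOf_eq] at hk
        simp only [Set.mem_preimage, Set.mem_setOf_eq]
        show h₁ (wrd F (Fin.append (fun i => (FreeMonoid.toList w).get i) es)
          (Fin.append (fun _ => 1) k)) ≠ 0
        rw [wrd_append, ← single_eq_wrd]
        exact hk
      refine Set.Finite.subset (Set.Finite.biUnion x.coeff.support.finite_toSet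
        (fun w _ => key w)) ?_
      intro k hk
      simp only [Set.mem_setOf_eq, LinearMap.coe_comp, Function.comp_apply,
        LinearMap.mulLeft_apply] at hk
      by_contra hc
      apply hk
      have hx0 : ∀ w ∈ x.coeff.support, h₁ (MonoidAlgebra.single w (1 : F) * wrd F es k) = 0 := by
        intro w hwsup
        by_contra h0'
        exact hc (Set.mem_biUnion (Finset.mem_coe.mpr hwsup) h0')
      show h₁ (x * wrd F es k) = 0
      have hxsum : x = ∑ w ∈ x.coeff.support, MonoidAlgebra.single w (x.coeff w) := by
        conv_lhs => rw [← MonoidAlgebra.sum_coeff_single x]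
        rfl
      rw [hxsum, Finset.sum_mul, map_sum]
      refine Finset.sum_eq_zero fun w hw => ?_
      have : (MonoidAlgebra.single w (x.coeff w) : MonoidAlgebra F (FreeMonoid E)) =
          x.coeff w • MonoidAlgebra.single w (1 : F) := by
        rw [MonoidAlgebra.smul_single', mul_one]
      rw [this, smul_mul_assoc, map_smul, hx0 w hw, smul_zero]
  · -- antipode
    intro h₁ hh₁ p es
    have hinj : Function.Injective fun k : Fin p → ℕ => k ∘ Fin.rev := by
      intro k k' hkk
      funext m
      have := congrFun hkk (Fin.rev m)
      simpa [Fin.rev_rev] using this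
    refine Set.Finite.subset (Set.Finite.preimage hinj.injOn (hh₁ p (es ∘ Fin.rev))) ?_
    intro k hk
    simp only [Set.mem_setOf_eq, LinearMap.coe_comp, Function.comp_apply] at hk
    simp only [Set.mem_preimage, Set.mem_setOf_eq]
    show h₁ (wrd F (es ∘ Fin.rev) (k ∘ Fin.rev)) ≠ 0
    rw [wrd_def] at hk
    rw [S_wrd S hS2 hS3 hS1 p es k, map_smul, smul_eq_mul] at hk
    exact fun h0 => hk (by rw [h0, mul_zero])
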